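/- (Individual-material gradient formulas, Section S.2.) Let B, R, q ≥ 1, let X_m, Y_m ∈ Matrix (Fin R) (Fin B) ℝ, D ∈ Matrix (Fin R) (Fin q) ℝ, E ∈ Matrix (Fin q) (Fin R) ℝ, and α : Fin q → ℝ with |(E·Y_m)_{k,b}| ≠ exp(α k) for all k, b, and set Z_{k,b} = Real.sign((E·Y_m)_{k,b}) · max(|(E·Y_m)_{k,b}| − exp(α k), 0). Define L(D, E, α) = (1/B) ∑_{r,b} ( (X_m)_{r,b} − (D·Z)_{r,b} )² where Z depends on E and α as above. Then, under the nondegeneracy condition, at (D, E, α) the partial Fréchet derivatives exist and are represented by the gradients: ∂L/∂D = −(2/B)(X_m − D·Z)·Zᵀ; ∂L/∂E has entries (∂L/∂E)_{k,j} = −(2/B) ∑_b (Dᵀ·(X_m − D·Z))_{k,b} · (if exp(α k) < |(E·Y_m)_{k,b}| then 1 else 0) · (Y_m)_{j,b}; and (∂L/∂α)_k = (2/B) ∑_b (Dᵀ·(X_m − D·Z))_{k,b} · exp(α k) · Real.sign(Z_{k,b}). -/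

import Mathlib

set_option maxHeartbeats 1000000

open Matrix

open Real in
lemma shrink_deriv (c t : ℝ) (hc : 0 < c) (h : |t| ≠ c) :
    HasDerivAt (fun s : ℝ => Real.sign s * max (|s| - c) 0)
      (if c < |t| then 1 else 0) t := by
  rcases lt_or_gt_of_ne h with hlt | hgt
  · rw [if_neg (not_lt.2 hlt.le)]
    have hev : (fun s : ℝ => Real.sign s * max (|s| - c) 0) =ᶠ[nhds t] (fun _ => (0:ℝ)) := by
      filter_upwards [(isOpen_lt continuous_abs continuous_const).mem_nhds hlt] with s hs
      simp [max_eq_right (by linarith [hs] : |s| - c ≤ 0)]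
    exact hev.hasDerivAt_iff.2 (hasDerivAt_const t 0)
  · rw [if_pos hgt]
    rcases lt_or_gt_of_ne (fun h0 => by simp [h0] at hgt; linarith : t ≠ 0) with htneg | htpos
    · have hev : (fun s : ℝ => Real.sign s * max (|s| - c) 0) =ᶠ[nhds t] (fun s => s + c) := by
        filter_upwards [(isOpen_lt continuous_id (continuous_const (y := -c))).mem_nhds
          (by rw [abs_of_neg htneg] at hgt; linarith : t < -c)] with s hs
        have hsneg : s < 0 := by simp at hs; linarith
        rw [Real.sign_of_neg hsneg, abs_of_neg hsneg,
          max_eq_left (by simp at hs; linarith : (0:ℝ) ≤ -s - c)]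
        ring
      exact hev.hasDerivAt_iff.2 (by simpa using (hasDerivAt_id t).add_const c)
    · have hev : (fun s : ℝ => Real.sign s * max (|s| - c) 0) =ᶠ[nhds t] (fun s => s - c) := by
        filter_upwards [(isOpen_lt (continuous_const (y := c)) continuous_id).mem_nhds
          (by rw [abs_of_pos htpos] at hgt; exact hgt : c < t)] with s hs
        have hspos : (0:ℝ) < s := lt_trans hc hs
        rw [Real.sign_of_pos hspos, abs_of_pos hspos,
          max_eq_left (by simp at hs; linarith : (0:ℝ) ≤ s - c)]
        ring
      exact hev.hasDerivAt_iff.2 (by simpa using (hasDerivAt_id t).sub_const c)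

lemma shrink_exp_deriv (s u : ℝ) (h : |s| ≠ Real.exp u) :
    HasDerivAt (fun a : ℝ => Real.sign s * max (|s| - Real.exp a) 0)
      (if Real.exp u < |s| then -(Real.sign s * Real.exp u) else 0) u := by
  rcases lt_or_gt_of_ne h with hlt | hgt
  · rw [if_neg (not_lt.2 hlt.le)]
    have hev : (fun a : ℝ => Real.sign s * max (|s| - Real.exp a) 0) =ᶠ[nhds u] (fun _ => (0:ℝ)) := by
      filter_upwards [(isOpen_lt continuous_const Real.continuous_exp).mem_nhds hlt] with a ha
      rw [max_eq_right (by linarith : |s| - Real.exp a ≤ 0), mul_zero]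
    exact hev.hasDerivAt_iff.2 (hasDerivAt_const u 0)
  · rw [if_pos hgt]
    have hev : (fun a : ℝ => Real.sign s * max (|s| - Real.exp a) 0) =ᶠ[nhds u]
        (fun a => Real.sign s * (|s| - Real.exp a)) := by
      filter_upwards [(isOpen_lt Real.continuous_exp continuous_const).mem_nhds hgt] with a ha
      rw [max_eq_left (by linarith : (0:ℝ) ≤ |s| - Real.exp a)]
    refine hev.hasDerivAt_iff.2 ?_
    have := ((hasDerivAt_const u |s|).sub (Real.hasDerivAt_exp u)).const_mul (Real.sign s)
    simpa using this

lemma sum_swap3 {ι₁ ι₂ ι₃ : Type*} [Fintype ι₁] [Fintype ι₂] [Fintype ι₃]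
    (f : ι₁ → ι₂ → ι₃ → ℝ) :
    ∑ a, ∑ b, ∑ c, f a b c = ∑ c, ∑ b, ∑ a, f a b c := by
  rw [Finset.sum_comm]
  exact Eq.trans (Finset.sum_congr rfl fun b _ => Finset.sum_comm) Finset.sum_comm

lemma sum_swap4 {ι₁ ι₂ ι₃ ι₄ : Type*} [Fintype ι₁] [Fintype ι₂] [Fintype ι₃] [Fintype ι₄]
    (f : ι₁ → ι₂ → ι₃ → ι₄ → ℝ) :
    ∑ a, ∑ b, ∑ c, ∑ d, f a b c d = ∑ c, ∑ d, ∑ b, ∑ a, f a b c d := by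
  calc ∑ a, ∑ b, ∑ c, ∑ d, f a b c d
      = ∑ a, ∑ c, ∑ b, ∑ d, f a b c d :=
        Finset.sum_congr rfl fun a _ => Finset.sum_comm
    _ = ∑ c, ∑ a, ∑ b, ∑ d, f a b c d := Finset.sum_comm
    _ = ∑ c, ∑ d, ∑ b, ∑ a, f a b c d :=
        Finset.sum_congr rfl fun c _ => sum_swap3 _

/-- Section S.2: the three partial Fréchet derivatives of the individual-material
training loss `L(D,E,α) = (1/B)‖X_m − D T_{exp(α1ᵀ)}(E Y_m)‖_F²`, under the
nondegeneracy condition `|E Y_m| ≠ exp(α)`: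
`∂L/∂D = −(2/B)(X_m − DZ)Zᵀ`,
`∂L/∂E = −(2/B)[Dᵀ(X_m − DZ) ⊙ 1_{|EY_m| > exp(α1ᵀ)}]Y_mᵀ`, and
`∂L/∂α = (2/B){Dᵀ(X_m − DZ) ⊙ exp(α1ᵀ) ⊙ sign(Z)}1`. -/
theorem individual_material_gradients (B R q : ℕ) (hB : 1 ≤ B) (hR : 1 ≤ R) (hq : 1 ≤ q)
    (Xm Ym : Matrix (Fin R) (Fin B) ℝ)
    (D : Matrix (Fin R) (Fin q) ℝ) (E : Matrix (Fin q) (Fin R) ℝ)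
    (α : Fin q → ℝ)
    (hnd : ∀ (k : Fin q) (b : Fin B), |(E * Ym) k b| ≠ Real.exp (α k))
    (Z : Matrix (Fin q) (Fin B) ℝ)
    (hZ : ∀ (k : Fin q) (b : Fin B),
      Z k b = Real.sign ((E * Ym) k b) * max (|(E * Ym) k b| - Real.exp (α k)) 0) :
    (∃ f : (Fin R → Fin q → ℝ) →L[ℝ] ℝ,
      (∀ H : Fin R → Fin q → ℝ,
        f H = ∑ r : Fin R, ∑ k : Fin q,
          (-(2 / (B : ℝ)) * ∑ b : Fin B, (Xm r b - (D * Z) r b) * Z k b) * H r k) ∧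
      HasFDerivAt
        (fun D' : Fin R → Fin q → ℝ =>
          (1 / (B : ℝ)) * ∑ r : Fin R, ∑ b : Fin B,
            (Xm r b - ∑ k : Fin q, D' r k * Z k b) ^ 2)
        f (fun r k => D r k))
    ∧
    (∃ g : (Fin q → Fin R → ℝ) →L[ℝ] ℝ,
      (∀ H : Fin q → Fin R → ℝ,
        g H = ∑ k : Fin q, ∑ j : Fin R,
          (-(2 / (B : ℝ)) * ∑ b : Fin B,
            (Dᵀ * (Xm - D * Z)) k b
              * (if Real.exp (α k) < |(E * Ym) k b| then 1 else 0)
              * Ym j b) * H k j) ∧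
      HasFDerivAt
        (fun E' : Fin q → Fin R → ℝ =>
          (1 / (B : ℝ)) * ∑ r : Fin R, ∑ b : Fin B,
            (Xm r b - ∑ k : Fin q,
              D r k * (Real.sign (∑ j : Fin R, E' k j * Ym j b)
                * max (|∑ j : Fin R, E' k j * Ym j b| - Real.exp (α k)) 0)) ^ 2)
        g (fun k j => E k j))
    ∧
    (∃ h : (Fin q → ℝ) →L[ℝ] ℝ,
      (∀ v : Fin q → ℝ,
        h v = ∑ k : Fin q,
          ((2 / (B : ℝ)) * ∑ b : Fin B,
            (Dᵀ * (Xm - D * Z)) k b * Real.exp (α k) * Real.sign (Z k b)) * v k) ∧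
      HasFDerivAt
        (fun a : Fin q → ℝ =>
          (1 / (B : ℝ)) * ∑ r : Fin R, ∑ b : Fin B,
            (Xm r b - ∑ k : Fin q,
              D r k * (Real.sign ((E * Ym) k b)
                * max (|(E * Ym) k b| - Real.exp (a k)) 0)) ^ 2)
        h α) := by
  refine ⟨?_, ?_, ?_⟩
  ·
    set ℓ : Fin R → Fin B → ((Fin R → Fin q → ℝ) →L[ℝ] ℝ) := fun r b =>
      ∑ k : Fin q, ((ContinuousLinearMap.proj k).comp
        (ContinuousLinearMap.proj (R := ℝ) (φ := fun _ : Fin R => Fin q → ℝ) r)).smulRight (Z k b)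
      with hℓdef
    have hℓ : ∀ (r : Fin R) (b : Fin B) (H : Fin R → Fin q → ℝ),
        ℓ r b H = ∑ k : Fin q, H r k * Z k b := by
      intro r b H
      simp [hℓdef]
    have hder : HasFDerivAt
        (fun D' : Fin R → Fin q → ℝ =>
          (1 / (B : ℝ)) * ∑ r : Fin R, ∑ b : Fin B,
            (Xm r b - ∑ k : Fin q, D' r k * Z k b) ^ 2)
        ((1 / (B : ℝ)) • ∑ r : Fin R, ∑ b : Fin B,
          ((2 : ℕ) * (Xm r b - ℓ r b (fun r k => D r k)) ^ 1) • (-(ℓ r b)))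
        (fun r k => D r k) := by
      simp only [← hℓ]
      refine HasFDerivAt.const_mul (HasFDerivAt.fun_sum fun r _ => HasFDerivAt.fun_sum fun b _ => ?_) _
      have h1 : HasFDerivAt (fun D' : Fin R → Fin q → ℝ => Xm r b - ℓ r b D')
          (-(ℓ r b)) (fun r k => D r k) := (ℓ r b).hasFDerivAt.const_sub (Xm r b)
      exact (hasDerivAt_pow 2 (Xm r b - ℓ r b (fun r k => D r k))).comp_hasFDerivAt (fun r k => D r k) h1
    refine ⟨_, fun H => ?_, hder⟩
    simp only [ContinuousLinearMap.smul_apply, ContinuousLinearMap.sum_apply,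
      ContinuousLinearMap.neg_apply, smul_eq_mul, hℓ, Matrix.mul_apply, pow_one,
      Nat.cast_ofNat]
    rw [Finset.mul_sum]
    refine Finset.sum_congr rfl fun r _ => ?_
    simp only [mul_neg, Finset.mul_sum, Finset.sum_mul, neg_mul, Finset.sum_neg_distrib]
    rw [Finset.sum_comm]
    exact neg_inj.2 (Finset.sum_congr rfl fun k _ => Finset.sum_congr rfl fun b _ => by ring)
  ·
    set m2 : Fin q → Fin B → ((Fin q → Fin R → ℝ) →L[ℝ] ℝ) := fun k b =>
      ∑ j : Fin R, ((ContinuousLinearMap.proj j).comp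
        (ContinuousLinearMap.proj (R := ℝ) (φ := fun _ : Fin q => Fin R → ℝ) k)).smulRight (Ym j b)
      with hm2def
    have hm2 : ∀ (k : Fin q) (b : Fin B) (H : Fin q → Fin R → ℝ),
        m2 k b H = ∑ j : Fin R, H k j * Ym j b := by
      intro k b H
      simp [hm2def]
    set ind : Fin q → Fin B → ℝ := fun k b =>
      if Real.exp (α k) < |(E * Ym) k b| then 1 else 0 with hind
    have hpt : ∀ (k : Fin q) (b : Fin B), m2 k b (fun k j => E k j) = (E * Ym) k b := by
      intro k b
      rw [hm2, Matrix.mul_apply]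
    set M : Fin R → Fin B → ((Fin q → Fin R → ℝ) →L[ℝ] ℝ) := fun r b =>
      ∑ k : Fin q, D r k • (ind k b • m2 k b) with hM
    have hval2 : ∀ (r : Fin R) (b : Fin B),
        (∑ k : Fin q, D r k * (Real.sign (m2 k b (fun k j => E k j))
          * max (|m2 k b (fun k j => E k j)| - Real.exp (α k)) 0)) = (D * Z) r b := by
      intro r b
      conv_rhs => rw [Matrix.mul_apply]
      exact Finset.sum_congr rfl fun k _ => by rw [hpt, ← hZ]
    have hinner : ∀ (r : Fin R) (b : Fin B), HasFDerivAt
        (fun E' : Fin q → Fin R → ℝ => ∑ k : Fin q, D r k * (Real.sign (m2 k b E')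
          * max (|m2 k b E'| - Real.exp (α k)) 0)) (M r b) (fun k j => E k j) := by
      intro r b
      refine HasFDerivAt.fun_sum fun k _ => ?_
      have h0' : HasDerivAt (fun s : ℝ => Real.sign s * max (|s| - Real.exp (α k)) 0)
          (ind k b) (m2 k b (fun k j => E k j)) := by
        rw [hpt k b]
        simp only [hind]
        exact shrink_deriv (Real.exp (α k)) ((E * Ym) k b) (Real.exp_pos _) (hnd k b)
      exact (h0'.comp_hasFDerivAt (fun k j => E k j) (m2 k b).hasFDerivAt).const_mul (D r k)
    have hder : HasFDerivAt
        (fun E' : Fin q → Fin R → ℝ =>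
          (1 / (B : ℝ)) * ∑ r : Fin R, ∑ b : Fin B,
            (Xm r b - ∑ k : Fin q,
              D r k * (Real.sign (∑ j : Fin R, E' k j * Ym j b)
                * max (|∑ j : Fin R, E' k j * Ym j b| - Real.exp (α k)) 0)) ^ 2)
        ((1 / (B : ℝ)) • ∑ r : Fin R, ∑ b : Fin B,
          ((2 : ℕ) * (Xm r b - (D * Z) r b) ^ 1) • (-(M r b))) (fun k j => E k j) := by
      simp only [← hm2]
      refine HasFDerivAt.const_mul (HasFDerivAt.fun_sum fun r _ => HasFDerivAt.fun_sum fun b _ => ?_) _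
      have h1 := (hinner r b).const_sub (Xm r b)
      have h2 := (hasDerivAt_pow 2 (Xm r b - ∑ k : Fin q,
        D r k * (Real.sign (m2 k b (fun k j => E k j))
          * max (|m2 k b (fun k j => E k j)| - Real.exp (α k)) 0))).comp_hasFDerivAt
        (fun k j => E k j) h1
      rw [hval2 r b] at h2
      exact h2
    refine ⟨_, fun H => ?_, hder⟩
    simp only [ContinuousLinearMap.smul_apply, ContinuousLinearMap.sum_apply,
      ContinuousLinearMap.neg_apply, smul_eq_mul, pow_one, Nat.cast_ofNat, hm2,
      Matrix.mul_apply, Matrix.transpose_apply, Matrix.sub_apply, hM]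
    have hindeq : ∀ (k : Fin q) (b : Fin B),
        (if Real.exp (α k) < |∑ j : Fin R, E k j * Ym j b| then (1:ℝ) else 0) = ind k b := by
      intro k b
      simp only [hind]
      rw [show ((E * Ym) k b) = ∑ j : Fin R, E k j * Ym j b from Matrix.mul_apply]
    conv_rhs => simp only [hindeq]
    calc (1 / (B:ℝ)) * ∑ r : Fin R, ∑ b : Fin B,
          2 * (Xm r b - ∑ j' : Fin q, D r j' * Z j' b)
            * -(∑ k : Fin q, D r k * (ind k b * ∑ j : Fin R, H k j * Ym j b))
        = ∑ r : Fin R, ∑ b : Fin B, ∑ k : Fin q, ∑ j : Fin R,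
            -(2 / (B:ℝ)) * (D r k * (Xm r b - ∑ j' : Fin q, D r j' * Z j' b))
              * ind k b * Ym j b * H k j := by
          rw [Finset.mul_sum]
          refine Finset.sum_congr rfl fun r _ => ?_
          rw [Finset.mul_sum]
          refine Finset.sum_congr rfl fun b _ => ?_
          rw [show -(∑ k : Fin q, D r k * (ind k b * ∑ j : Fin R, H k j * Ym j b))
              = ∑ k : Fin q, ∑ j : Fin R, -(D r k * ind k b * Ym j b * H k j) from by
            rw [← Finset.sum_neg_distrib]
            refine Finset.sum_congr rfl fun k _ => ?_
            rw [Finset.mul_sum, Finset.mul_sum, ← Finset.sum_neg_distrib]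
            exact Finset.sum_congr rfl fun j _ => by ring]
          simp only [Finset.mul_sum]
          exact Finset.sum_congr rfl fun k _ => Finset.sum_congr rfl fun j _ => by ring
      _ = ∑ k : Fin q, ∑ j : Fin R, ∑ b : Fin B, ∑ r : Fin R,
            -(2 / (B:ℝ)) * (D r k * (Xm r b - ∑ j' : Fin q, D r j' * Z j' b))
              * ind k b * Ym j b * H k j := sum_swap4 _
      _ = ∑ k : Fin q, ∑ j : Fin R,
            (-(2 / (B:ℝ)) * ∑ b : Fin B,
              ((∑ r : Fin R, D r k * (Xm r b - ∑ j' : Fin q, D r j' * Z j' b))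
                * ind k b) * Ym j b) * H k j := by
          refine Finset.sum_congr rfl fun k _ => Finset.sum_congr rfl fun j _ => ?_
          conv_rhs => rw [Finset.mul_sum, Finset.sum_mul]
          refine Finset.sum_congr rfl fun b _ => ?_
          conv_rhs => rw [Finset.sum_mul, Finset.sum_mul, Finset.mul_sum, Finset.sum_mul]
          exact Finset.sum_congr rfl fun r _ => by ring
  ·
    set d : Fin q → Fin B → ℝ := fun k b =>
      if Real.exp (α k) < |(E * Ym) k b|
      then -(Real.sign ((E * Ym) k b) * Real.exp (α k)) else 0 with hd
    set m : Fin R → Fin B → ((Fin q → ℝ) →L[ℝ] ℝ) := fun r b =>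
      ∑ k : Fin q, D r k • (d k b • ContinuousLinearMap.proj (R := ℝ) (φ := fun _ : Fin q => ℝ) k)
      with hm
    have hval : ∀ (r : Fin R) (b : Fin B),
        (∑ k : Fin q, D r k * (Real.sign ((E * Ym) k b)
          * max (|(E * Ym) k b| - Real.exp (α k)) 0)) = (D * Z) r b := by
      intro r b
      conv_rhs => rw [Matrix.mul_apply]
      exact Finset.sum_congr rfl fun k _ => by rw [← hZ]
    have hinner : ∀ (r : Fin R) (b : Fin B), HasFDerivAt
        (fun a : Fin q → ℝ => ∑ k : Fin q, D r k * (Real.sign ((E * Ym) k b)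
          * max (|(E * Ym) k b| - Real.exp (a k)) 0)) (m r b) α := by
      intro r b
      refine HasFDerivAt.fun_sum fun k _ => ?_
      have hp : HasFDerivAt (fun a : Fin q → ℝ => a k)
          (ContinuousLinearMap.proj (R := ℝ) (φ := fun _ : Fin q => ℝ) k) α :=
        (ContinuousLinearMap.proj (R := ℝ) (φ := fun _ : Fin q => ℝ) k).hasFDerivAt (x := α)
      exact ((shrink_exp_deriv _ (α k) (hnd k b)).comp_hasFDerivAt α hp).const_mul (D r k)
    have hder : HasFDerivAt
        (fun a : Fin q → ℝ =>
          (1 / (B : ℝ)) * ∑ r : Fin R, ∑ b : Fin B,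
            (Xm r b - ∑ k : Fin q,
              D r k * (Real.sign ((E * Ym) k b)
                * max (|(E * Ym) k b| - Real.exp (a k)) 0)) ^ 2)
        ((1 / (B : ℝ)) • ∑ r : Fin R, ∑ b : Fin B,
          ((2 : ℕ) * (Xm r b - (D * Z) r b) ^ 1) • (-(m r b))) α := by
      refine HasFDerivAt.const_mul (HasFDerivAt.fun_sum fun r _ => HasFDerivAt.fun_sum fun b _ => ?_) _
      have h1 := (hinner r b).const_sub (Xm r b)
      have h2 := (hasDerivAt_pow 2 (Xm r b - ∑ k : Fin q,
        D r k * (Real.sign ((E * Ym) k b)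
          * max (|(E * Ym) k b| - Real.exp (α k)) 0))).comp_hasFDerivAt α h1
      rw [hval r b] at h2
      exact h2
    refine ⟨_, fun v => ?_, hder⟩
    have hsign : ∀ (k : Fin q) (b : Fin B),
        -(d k b) = Real.exp (α k) * Real.sign (Z k b) := by
      intro k b
      by_cases hc : Real.exp (α k) < |(E * Ym) k b|
      · have hne : (E * Ym) k b ≠ 0 := by
          intro h0; rw [h0, abs_zero] at hc; exact absurd hc (not_lt.2 (Real.exp_pos _).le)
        have hZpos : Z k b = Real.sign ((E * Ym) k b) * (|(E * Ym) k b| - Real.exp (α k)) := by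
          rw [hZ, max_eq_left (by linarith : (0:ℝ) ≤ |(E * Ym) k b| - Real.exp (α k))]
        rcases lt_or_gt_of_ne hne with hneg | hpos
        · rw [hd]; simp only [if_pos hc]
          rw [Real.sign_of_neg hneg] at hZpos ⊢
          have : Z k b < 0 := by rw [hZpos]; nlinarith
          rw [Real.sign_of_neg this]; ring
        · rw [hd]; simp only [if_pos hc]
          rw [Real.sign_of_pos hpos] at hZpos ⊢
          have : 0 < Z k b := by rw [hZpos]; nlinarith
          rw [Real.sign_of_pos this]; ring
      · have hZ0 : Z k b = 0 := by
          rw [hZ, max_eq_right (by push_neg at hc; linarith : |(E * Ym) k b| - Real.exp (α k) ≤ 0),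
            mul_zero]
        rw [hd]; simp [if_neg hc, hZ0]
    simp only [ContinuousLinearMap.smul_apply, ContinuousLinearMap.sum_apply,
      ContinuousLinearMap.neg_apply, ContinuousLinearMap.proj_apply, smul_eq_mul, pow_one,
      Nat.cast_ofNat, Matrix.mul_apply, Matrix.transpose_apply, Matrix.sub_apply, hm]
    have swap3 : ∀ (f : Fin R → Fin B → Fin q → ℝ),
        (∑ r : Fin R, ∑ b : Fin B, ∑ k : Fin q, f r b k)
          = ∑ k : Fin q, ∑ b : Fin B, ∑ r : Fin R, f r b k := by
      intro f
      rw [Finset.sum_comm]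
      exact Eq.trans (Finset.sum_congr rfl fun b _ => Finset.sum_comm) Finset.sum_comm
    calc (1 / (B:ℝ)) * ∑ r : Fin R, ∑ b : Fin B,
          2 * (Xm r b - ∑ j : Fin q, D r j * Z j b) * -(∑ k : Fin q, D r k * (d k b * v k))
        = ∑ r : Fin R, ∑ b : Fin B, ∑ k : Fin q,
            (2 / (B:ℝ)) * (D r k * (Xm r b - ∑ j : Fin q, D r j * Z j b))
              * (Real.exp (α k) * Real.sign (Z k b)) * v k := by
          rw [Finset.mul_sum]
          refine Finset.sum_congr rfl fun r _ => ?_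
          rw [Finset.mul_sum]
          refine Finset.sum_congr rfl fun b _ => ?_
          rw [show -(∑ k : Fin q, D r k * (d k b * v k))
              = ∑ k : Fin q, D r k * (Real.exp (α k) * Real.sign (Z k b)) * v k from by
            rw [← Finset.sum_neg_distrib]
            exact Finset.sum_congr rfl fun k _ => by rw [← hsign k b]; ring]
          rw [Finset.mul_sum, Finset.mul_sum]
          exact Finset.sum_congr rfl fun k _ => by ring
      _ = ∑ k : Fin q, ∑ b : Fin B, ∑ r : Fin R,
            (2 / (B:ℝ)) * (D r k * (Xm r b - ∑ j : Fin q, D r j * Z j b))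
              * (Real.exp (α k) * Real.sign (Z k b)) * v k := swap3 _
      _ = ∑ k : Fin q,
            (2 / (B:ℝ) * ∑ b : Fin B,
              (∑ r : Fin R, D r k * (Xm r b - ∑ j : Fin q, D r j * Z j b))
                * Real.exp (α k) * Real.sign (Z k b)) * v k := by
          refine Finset.sum_congr rfl fun k _ => ?_
          rw [Finset.mul_sum, Finset.sum_mul]
          refine Finset.sum_congr rfl fun b _ => ?_
          rw [Finset.sum_mul, Finset.sum_mul, Finset.mul_sum, Finset.sum_mul]
          exact Finset.sum_congr rfl fun r _ => by ring
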